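/- arXiv:0710.2751 — 2 statements merged into one kernel-verified Lean document; each statement's English description precedes it below -/
import Mathlib

section
/- Let (Ω, P) be a probability space, let f : ℝ≥0 → Ω → ℕ be such that for each t the map ω ↦ f t ω is measurable, for each ω the map t ↦ f t ω is nondecreasing and right-continuous, and suppose the function Λ(t) := E[f t] is finite for every t and differentiable at every t > 0. Define the capture time T(ω) := inf{t ≥ 0 : f t ω ≥ 1} (with T(ω) = ∞ if no such t exists). Then the law of T gives zero mass to every Lebesgue-null set of positive reals: for every Borel set A ⊆ ℝ with Lebesgue measure zero, P({ω : 0 < T(ω) < ∞ and T(ω) ∈ A}) = 0. (This is the abstracted content of the paper's Theorem: for any birth-and-growth process in the class 𝒢, the time of capture T(x) of a point x admits a probability density function, where f t ω plays the role of the number N(𝒞(t,x)) of nucleation events in the causal cone, and Λ(t) = Λ(𝒞(t,x)) is continuously differentiable in t.) -/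
open scoped NNReal ENNReal
open MeasureTheory Filter

/-- The capture time: the first time `t ≥ 0` at which the counting family `f`
reaches at least `1`, with value `∞` if this never happens. -/
noncomputable def captureTime {Ω : Type*} (f : ℝ≥0 → Ω → ℕ) (ω : Ω) : ℝ≥0∞ :=
  sInf ((fun t : ℝ≥0 => (t : ℝ≥0∞)) '' {t : ℝ≥0 | 1 ≤ f t ω})

section Aux

variable {Ω : Type*} {f : ℝ≥0 → Ω → ℕ}

/-- Characterization of the capture time via the counting family. -/
lemma captureTime_le_iff
    (hmono : ∀ ω : Ω, Monotone (fun t => f t ω))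
    (hrc : ∀ ω : Ω, ∀ t : ℝ≥0,
      Tendsto (fun s => f s ω) (nhdsWithin t (Set.Ici t)) (nhds (f t ω)))
    (ω : Ω) (t : ℝ≥0) :
    captureTime f ω ≤ (t : ℝ≥0∞) ↔ 1 ≤ f t ω := by
  constructor
  · intro h
    by_contra hlt
    push_neg at hlt
    -- `f t ω = 0`
    have hev : (fun s => f s ω) ⁻¹' {f t ω} ∈ nhdsWithin t (Set.Ici t) :=
      (hrc ω t) ((isOpen_discrete _).mem_nhds rfl)
    rw [Metric.mem_nhdsWithin_iff] at hev
    obtain ⟨δ, δpos, hδ⟩ := hev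
    set ε : ℝ≥0 := δ.toNNReal / 2 with hε
    have εpos : 0 < ε := by
      have : 0 < δ.toNNReal := Real.toNNReal_pos.2 δpos
      positivity
    have hεδ : (ε : ℝ) < δ := by
      have h1 : (ε : ℝ) = δ.toNNReal / 2 := by
        rw [hε]; push_cast; ring
      have h2 : (δ.toNNReal : ℝ) = δ := Real.coe_toNNReal _ δpos.le
      rw [h1, h2]; linarith
    have hkey : ∀ u : ℝ≥0, 1 ≤ f u ω → t + ε ≤ u := by
      intro u hu
      have htu : t < u := by
        by_contra hle
        push_neg at hle
        have h' : f u ω ≤ f t ω := hmono ω hle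
        omega
      by_contra hlt'
      push_neg at hlt'
      have hmem : u ∈ Metric.ball t δ ∩ Set.Ici t := by
        constructor
        · rw [Metric.mem_ball, NNReal.dist_eq]
          have h1 : (u : ℝ) < t + ε := by exact_mod_cast hlt'
          have h2 : (t : ℝ) ≤ u := by exact_mod_cast htu.le
          rw [abs_of_nonneg (by linarith)]
          push_cast at h1 ⊢
          linarith
        · exact htu.le
      have := hδ hmem
      simp only [Set.mem_preimage, Set.mem_singleton_iff] at this
      rw [this] at hu
      omega
    have hge : ((t + ε : ℝ≥0) : ℝ≥0∞) ≤ captureTime f ω := by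
      apply le_sInf
      rintro b ⟨u, hu, rfl⟩
      show ((t + ε : ℝ≥0) : ℝ≥0∞) ≤ (u : ℝ≥0∞)
      exact_mod_cast hkey u hu
    have : ((t + ε : ℝ≥0) : ℝ≥0∞) ≤ (t : ℝ≥0∞) := hge.trans h
    have h6 : t + ε ≤ t := by exact_mod_cast this
    have h7 : t < t + ε := lt_add_of_pos_right t εpos
    exact absurd h6 (not_le.2 h7)
  · intro h
    exact sInf_le ⟨t, h, rfl⟩

lemma measurable_captureTime [MeasurableSpace Ω]
    (hmeas : ∀ t : ℝ≥0, Measurable (f t))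
    (hmono : ∀ ω : Ω, Monotone (fun t => f t ω))
    (hrc : ∀ ω : Ω, ∀ t : ℝ≥0,
      Tendsto (fun s => f s ω) (nhdsWithin t (Set.Ici t)) (nhds (f t ω))) :
    Measurable (fun ω => captureTime f ω) := by
  apply measurable_of_Iic
  intro x
  induction x using ENNReal.recTopCoe with
  | top => simp
  | coe t =>
      have : (fun ω => captureTime f ω) ⁻¹' Set.Iic (t : ℝ≥0∞)
          = f t ⁻¹' Set.Ici 1 := by
        ext ω
        simp [captureTime_le_iff hmono hrc ω t]
      rw [this]
      exact (hmeas t) ((Set.to_countable _).measurableSet)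

end Aux

/-- For a monotone, right-continuous, ℕ-valued counting family with finite mean
`Λ` that is differentiable at every positive time, the law of the capture time
gives zero mass to every Lebesgue-null Borel set of positive reals. -/
theorem captureTime_law_absolutelyContinuous
    {Ω : Type*} [MeasurableSpace Ω] (P : Measure Ω) [IsProbabilityMeasure P]
    (f : ℝ≥0 → Ω → ℕ)
    (hmeas : ∀ t : ℝ≥0, Measurable (f t))
    (hmono : ∀ ω : Ω, Monotone (fun t => f t ω))
    (hrc : ∀ ω : Ω, ∀ t : ℝ≥0,
      Tendsto (fun s => f s ω) (nhdsWithin t (Set.Ici t)) (nhds (f t ω)))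
    (hint : ∀ t : ℝ≥0, Integrable (fun ω => (f t ω : ℝ)) P)
    (Λ : ℝ → ℝ)
    (hΛ : ∀ t : ℝ≥0, Λ (t : ℝ) = ∫ ω, (f t ω : ℝ) ∂P)
    (hdiff : ∀ t : ℝ, 0 < t → DifferentiableAt ℝ Λ t) :
    ∀ A : Set ℝ, MeasurableSet A → volume A = 0 →
      P {ω | 0 < captureTime f ω ∧ captureTime f ω < ⊤ ∧
             (captureTime f ω).toReal ∈ A} = 0 := by
  intro A hA hA0
  set T : Ω → ℝ≥0∞ := fun ω => captureTime f ω with hTdef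
  have hTmeas : Measurable T := measurable_captureTime hmeas hmono hrc
  set φ : Ω → ℝ := fun ω => (T ω).toReal with hφdef
  have hφ : Measurable φ := ENNReal.measurable_toReal.comp hTmeas
  -- The fundamental Chebyshev-type estimate.
  have cheb : ∀ s t : ℝ, 0 ≤ s → s ≤ t →
      P {ω | ENNReal.ofReal s < T ω ∧ T ω ≤ ENNReal.ofReal t}
        ≤ ENNReal.ofReal (Λ t - Λ s) := by
    intro s t hs hst
    set s' : ℝ≥0 := s.toNNReal with hs'
    set t' : ℝ≥0 := t.toNNReal with ht'
    have hs't' : s' ≤ t' := Real.toNNReal_mono hst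
    set g : Ω → ℝ := fun ω => (f t' ω : ℝ) - (f s' ω : ℝ) with hg
    have hg0 : ∀ ω, 0 ≤ g ω := by
      intro ω
      have := hmono ω hs't'
      simp only [hg, sub_nonneg]
      exact_mod_cast this
    have hgi : Integrable g P := (hint t').sub (hint s')
    have hsubE : {ω | ENNReal.ofReal s < T ω ∧ T ω ≤ ENNReal.ofReal t}
        ⊆ {ω | 1 ≤ g ω} := by
      rintro ω ⟨h1, h2⟩
      have ht1 : 1 ≤ f t' ω := by
        rw [← captureTime_le_iff hmono hrc ω t']
        exact h2
      have hs0 : f s' ω = 0 := by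
        by_contra h'
        have h'' : 1 ≤ f s' ω := Nat.one_le_iff_ne_zero.2 h'
        have : T ω ≤ (s' : ℝ≥0∞) :=
          (captureTime_le_iff hmono hrc ω s').2 h''
        exact absurd h1 (not_lt.2 this)
      simp only [hg, Set.mem_setOf_eq, hs0, Nat.cast_zero, sub_zero]
      exact_mod_cast ht1
    have hmarkov := mul_meas_ge_le_integral_of_nonneg
      (Filter.Eventually.of_forall hg0) hgi 1
    rw [one_mul] at hmarkov
    have hint_eq : ∫ ω, g ω ∂P = Λ t - Λ s := by
      have h1 : ∫ ω, g ω ∂P = (∫ ω, (f t' ω : ℝ) ∂P) - ∫ ω, (f s' ω : ℝ) ∂P :=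
        integral_sub (hint t') (hint s')
      rw [h1, ← hΛ t', ← hΛ s']
      rw [ht', hs', Real.coe_toNNReal t (hs.trans hst), Real.coe_toNNReal s hs]
    calc P {ω | ENNReal.ofReal s < T ω ∧ T ω ≤ ENNReal.ofReal t}
        ≤ P {ω | 1 ≤ g ω} := measure_mono hsubE
      _ = ENNReal.ofReal ((P {ω | 1 ≤ g ω}).toReal) :=
          (ENNReal.ofReal_toReal (measure_ne_top _ _)).symm
      _ ≤ ENNReal.ofReal (Λ t - Λ s) := by
          apply ENNReal.ofReal_le_ofReal
          rw [← hint_eq]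
          exact hmarkov
  -- The core absolute-continuity step, for null sets bounded away from 0.
  have key : ∀ (lo : ℝ) (A' : Set ℝ), 0 < lo → MeasurableSet A' → volume A' = 0 →
      A' ⊆ Set.Ioi lo → P (φ ⁻¹' A') = 0 := by
    intro lo A' hlo hA'meas hA'0 hsub'
    set m : Measure ℝ := P.map φ with hm
    have hmap : ∀ (S : Set ℝ), MeasurableSet S → m S = P (φ ⁻¹' S) := by
      intro S hS
      exact Measure.map_apply hφ hS
    haveI : IsFiniteMeasure m := by
      constructor
      rw [hm, Measure.map_apply hφ MeasurableSet.univ]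
      exact measure_lt_top _ _
    set m' : Measure ℝ := m.restrict (Set.Ioi lo) with hm'
    haveI : IsFiniteMeasure m' := by
      constructor
      calc m' Set.univ ≤ m Set.univ := Measure.restrict_le_self _
        _ < ⊤ := measure_lt_top _ _
    -- the Vitali-family comparison on each slice where the derivative is bounded
    have hslice : ∀ N : ℕ, m' {x ∈ A' | deriv Λ x ≤ N} = 0 := by
      intro N
      set B := {x ∈ A' | deriv Λ x ≤ N} with hB
      set c : ℝ≥0 := 2 * (N + 1) with hc
      have hcomp : m' B ≤ (c • (volume : Measure ℝ)) B := by
        apply (Besicovitch.vitaliFamily m').measure_le_of_frequently_le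
          (c • (volume : Measure ℝ)) Measure.AbsolutelyContinuous.rfl
        intro x hx
        obtain ⟨hxA', hxd⟩ := hx
        have hxlo : lo < x := hsub' hxA'
        have hxpos : 0 < x := hlo.trans hxlo
        set d : ℝ := deriv Λ x with hd
        have hderiv : HasDerivAt Λ d x := (hdiff x hxpos).hasDerivAt
        -- slope convergence
        have hslope : Tendsto (slope Λ x) (nhdsWithin x {x}ᶜ) (nhds d) :=
          hasDerivAt_iff_tendsto_slope.1 hderiv
        have map1 : Tendsto (fun r : ℝ => x + r) (nhdsWithin 0 (Set.Ioi 0))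
            (nhdsWithin x {x}ᶜ) := by
          apply tendsto_nhdsWithin_of_tendsto_nhds_of_eventually_within
          · have : Tendsto (fun r : ℝ => x + r) (nhds 0) (nhds (x + 0)) :=
              (continuous_const.add continuous_id).tendsto 0
            simpa using this.mono_left nhdsWithin_le_nhds
          · filter_upwards [self_mem_nhdsWithin] with r hr
            have hr0 : (0:ℝ) < r := hr
            simp only [Set.mem_compl_iff, Set.mem_singleton_iff]
            intro h
            linarith [h]
        have map2 : Tendsto (fun r : ℝ => x - 2 * r) (nhdsWithin 0 (Set.Ioi 0))
            (nhdsWithin x {x}ᶜ) := by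
          apply tendsto_nhdsWithin_of_tendsto_nhds_of_eventually_within
          · have : Tendsto (fun r : ℝ => x - 2 * r) (nhds 0) (nhds (x - 2 * 0)) :=
              (continuous_const.sub (continuous_const.mul continuous_id)).tendsto 0
            simpa using this.mono_left nhdsWithin_le_nhds
          · filter_upwards [self_mem_nhdsWithin] with r hr
            have hr0 : (0:ℝ) < r := hr
            simp only [Set.mem_compl_iff, Set.mem_singleton_iff]
            intro h
            linarith [h]
        have s1 : Tendsto (fun r : ℝ => (Λ (x + r) - Λ x) / r)
            (nhdsWithin 0 (Set.Ioi 0)) (nhds d) := by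
          refine Tendsto.congr' ?_ (hslope.comp map1)
          filter_upwards [self_mem_nhdsWithin] with r hr
          simp only [Function.comp_apply, slope_def_field]
          rw [add_sub_cancel_left]
        have s2 : Tendsto (fun r : ℝ => (Λ x - Λ (x - 2 * r)) / r)
            (nhdsWithin 0 (Set.Ioi 0)) (nhds (2 * d)) := by
          have hcomp2 := hslope.comp map2
          have htwo : Tendsto (fun r : ℝ => 2 * slope Λ x (x - 2 * r))
              (nhdsWithin 0 (Set.Ioi 0)) (nhds (2 * d)) :=
            hcomp2.const_mul 2
          refine Tendsto.congr' ?_ htwo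
          filter_upwards [self_mem_nhdsWithin] with r hr
          have hr0 : (0:ℝ) < r := hr
          have hrne : r ≠ 0 := ne_of_gt hr0
          simp only [Function.comp_apply, slope_def_field]
          have h2r : x - 2 * r - x = -(2 * r) := by ring
          rw [h2r]
          field_simp
          ring
        have L : Tendsto (fun r : ℝ => (Λ (x + r) - Λ (x - 2 * r)) / r)
            (nhdsWithin 0 (Set.Ioi 0)) (nhds (3 * d)) := by
          have := s1.add s2
          have heq : ∀ r : ℝ, (Λ (x + r) - Λ x) / r + (Λ x - Λ (x - 2 * r)) / r
              = (Λ (x + r) - Λ (x - 2 * r)) / r := by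
            intro r; rw [← add_div]; ring_nf
          simp only [heq] at this
          convert this using 2
          ring
        have hd3 : 3 * d < 3 * N + 2 := by
          have : d ≤ N := hxd
          linarith
        have hev1 : ∀ᶠ r in nhdsWithin 0 (Set.Ioi 0),
            (Λ (x + r) - Λ (x - 2 * r)) / r < 3 * N + 2 :=
          L.eventually_lt_const hd3
        have hev2 : ∀ᶠ r in nhdsWithin 0 (Set.Ioi 0), r < lo / 3 :=
          eventually_nhdsWithin_of_eventually_nhds
            (Filter.Tendsto.eventually_lt_const (by positivity) tendsto_id)
        have hev : ∀ᶠ r in nhdsWithin 0 (Set.Ioi 0),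
            m' (Metric.closedBall x r)
              ≤ (c • (volume : Measure ℝ)) (Metric.closedBall x r) := by
          filter_upwards [hev1, hev2, self_mem_nhdsWithin] with r h1 h2 hr
          have hr0 : (0:ℝ) < r := hr
          have hxr : 0 < x - 2 * r := by
            have : lo < x := hxlo
            nlinarith
          -- bound the measure of the ball
          have step1 : m' (Metric.closedBall x r)
              ≤ m (Set.Ioc (x - 2 * r) (x + r)) := by
            calc m' (Metric.closedBall x r) ≤ m (Metric.closedBall x r) :=
                  Measure.restrict_le_self _
              _ ≤ m (Set.Ioc (x - 2 * r) (x + r)) := by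
                  apply measure_mono
                  intro y hy
                  rw [Real.closedBall_eq_Icc] at hy
                  constructor
                  · have := hy.1; linarith
                  · exact hy.2
          have step2 : m (Set.Ioc (x - 2 * r) (x + r))
              ≤ ENNReal.ofReal (Λ (x + r) - Λ (x - 2 * r)) := by
            rw [hmap _ measurableSet_Ioc]
            have hincl : φ ⁻¹' Set.Ioc (x - 2 * r) (x + r)
                ⊆ {ω | ENNReal.ofReal (x - 2 * r) < T ω ∧
                    T ω ≤ ENNReal.ofReal (x + r)} := by
              rintro ω ⟨hy1, hy2⟩
              have hTne : T ω ≠ ⊤ := by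
                intro h
                simp only [hφdef, h, ENNReal.toReal_top] at hy1
                linarith
              constructor
              · exact (ENNReal.ofReal_lt_iff_lt_toReal hxr.le hTne).2 hy1
              · exact (ENNReal.le_ofReal_iff_toReal_le hTne (by linarith)).2 hy2
            calc P (φ ⁻¹' Set.Ioc (x - 2 * r) (x + r))
                ≤ P {ω | ENNReal.ofReal (x - 2 * r) < T ω ∧
                    T ω ≤ ENNReal.ofReal (x + r)} := measure_mono hincl
              _ ≤ ENNReal.ofReal (Λ (x + r) - Λ (x - 2 * r)) :=
                  cheb _ _ hxr.le (by linarith)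
          have step3 : ENNReal.ofReal (Λ (x + r) - Λ (x - 2 * r))
              ≤ (c • (volume : Measure ℝ)) (Metric.closedBall x r) := by
            rw [Measure.smul_apply, Real.volume_closedBall, ENNReal.smul_def,
              smul_eq_mul]
            have h4 : (c : ℝ≥0∞) = ENNReal.ofReal (2 * (N + 1)) := by
              rw [hc]
              rw [ENNReal.ofReal]
              congr 1
              rw [Real.toNNReal_of_nonneg (by positivity)]
              ext
              push_cast
              ring
            rw [h4, ← ENNReal.ofReal_mul (by positivity)]
            apply ENNReal.ofReal_le_ofReal
            have h5 : Λ (x + r) - Λ (x - 2 * r) ≤ (3 * N + 2) * r := by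
              have := (div_lt_iff₀ hr0).1 h1
              linarith
            calc Λ (x + r) - Λ (x - 2 * r) ≤ (3 * N + 2) * r := h5
              _ ≤ 2 * (N + 1) * (2 * r) := by nlinarith
          exact step1.trans (step2.trans step3)
        exact ((Besicovitch.tendsto_filterAt m' x).frequently
          (hev.frequently))
      refine le_antisymm ?_ zero_le
      calc m' B ≤ (c • (volume : Measure ℝ)) B := hcomp
        _ ≤ (c • (volume : Measure ℝ)) A' := by
            apply measure_mono
            intro y hy; exact hy.1
        _ = 0 := by
            rw [Measure.smul_apply, hA'0, ENNReal.smul_def, smul_eq_mul, mul_zero]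
    -- put the slices together
    have hcover : A' ⊆ ⋃ N : ℕ, {x ∈ A' | deriv Λ x ≤ N} := by
      intro x hx
      obtain ⟨N, hN⟩ := exists_nat_ge (deriv Λ x)
      exact Set.mem_iUnion.2 ⟨N, hx, hN⟩
    have hm'A' : m' A' = 0 := by
      refine le_antisymm ?_ zero_le
      calc m' A' ≤ m' (⋃ N : ℕ, {x ∈ A' | deriv Λ x ≤ N}) := measure_mono hcover
        _ ≤ ∑' N : ℕ, m' {x ∈ A' | deriv Λ x ≤ N} := measure_iUnion_le _
        _ = 0 := by simp [hslice]
    have : m A' = 0 := by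
      have h1 : m' A' = m A' := by
        rw [hm', Measure.restrict_apply hA'meas,
          Set.inter_eq_left.2 hsub']
      rw [← h1, hm'A']
    rw [← hmap _ hA'meas]
    exact this
  -- cover the event by countably many bounded-away-from-zero pieces
  have hsub : {ω | 0 < T ω ∧ T ω < ⊤ ∧ (T ω).toReal ∈ A}
      ⊆ ⋃ n : ℕ, φ ⁻¹' (A ∩ Set.Ioi (1 / (n + 1) : ℝ)) := by
    rintro ω ⟨h1, h2, h3⟩
    have hxpos : 0 < (T ω).toReal :=
      ENNReal.toReal_pos (ne_of_gt h1) (ne_of_lt h2)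
    obtain ⟨n, hn⟩ := exists_nat_gt (1 / (T ω).toReal)
    refine Set.mem_iUnion.2 ⟨n, h3, ?_⟩
    have h4 : 1 / (T ω).toReal < n + 1 := hn.trans (by linarith)
    have h5 : (0:ℝ) < 1 / (T ω).toReal := by positivity
    have := one_div_lt_one_div_of_lt h5 h4
    rwa [one_div_one_div] at this
  refine le_antisymm ?_ zero_le
  calc P {ω | 0 < T ω ∧ T ω < ⊤ ∧ (T ω).toReal ∈ A}
      ≤ P (⋃ n : ℕ, φ ⁻¹' (A ∩ Set.Ioi (1 / (n + 1) : ℝ))) := measure_mono hsub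
    _ ≤ ∑' n : ℕ, P (φ ⁻¹' (A ∩ Set.Ioi (1 / (n + 1) : ℝ))) := measure_iUnion_le _
    _ = 0 := by
        have : ∀ n : ℕ, P (φ ⁻¹' (A ∩ Set.Ioi (1 / (n + 1) : ℝ))) = 0 := by
          intro n
          apply key (1 / (n + 1) : ℝ)
          · positivity
          · exact hA.inter measurableSet_Ioi
          · exact measure_mono_null Set.inter_subset_left hA0
          · exact Set.inter_subset_right
        simp only [this, tsum_zero]
end

section
/- Let μ be a finite Borel measure on ℝ and let g : ℝ → ℝ be a nondecreasing function that is differentiable at every point. If μ((s, t]) ≤ g(t) − g(s) for all s ≤ t, then μ is absolutely continuous with respect to Lebesgue measure. -/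
open MeasureTheory Set Metric Filter
open scoped ENNReal NNReal

-- auxiliary: the local estimate
lemma aux_local (μ : Measure ℝ) [IsFiniteMeasure μ]
    (g : ℝ → ℝ) (hg_diff : ∀ x : ℝ, DifferentiableAt ℝ g x)
    (hle : ∀ s t : ℝ, s ≤ t → (μ (Set.Ioc s t)).toReal ≤ g t - g s)
    (n : ℕ) (x : ℝ) (hx : 3 * deriv g x + 1 ≤ n) (δ : ℝ) (hδ : 0 < δ) :
    ({r : ℝ | 0 < r ∧ μ (closedBall x r) ≤ (n : ℝ≥0∞) * volume (closedBall x r)}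
      ∩ Ioo 0 δ).Nonempty := by
  set d := deriv g x with hd
  set F : ℝ → ℝ := fun r => g (x + r) - g (x - 2 * r) - 3 * d * r with hF
  have h1 : HasDerivAt (fun r : ℝ => g (x + r)) d 0 := by
    have hi : HasDerivAt (fun r : ℝ => x + r) 1 0 := (hasDerivAt_id 0).const_add x
    have := ((hg_diff (x + 0)).hasDerivAt).comp 0 hi
    simpa [Function.comp_def] using this
  have h2 : HasDerivAt (fun r : ℝ => g (x - 2 * r)) (d * (-2)) 0 := by
    have hi : HasDerivAt (fun r : ℝ => x - 2 * r) (-2) 0 := by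
      simpa using ((hasDerivAt_id (0:ℝ)).const_mul 2).const_sub x
    have := ((hg_diff (x - 2 * 0)).hasDerivAt).comp 0 hi
    simpa [Function.comp_def] using this
  have h3 : HasDerivAt (fun r : ℝ => 3 * d * r) (3 * d) 0 := by
    simpa using (hasDerivAt_id (0:ℝ)).const_mul (3 * d)
  have hF0 : HasDerivAt F 0 0 := by
    have := (h1.sub h2).sub h3
    have e : d - d * -2 - 3 * d = 0 := by ring
    rw [e] at this
    exact this
  have hT : Tendsto (slope F 0) (nhdsWithin 0 {(0:ℝ)}ᶜ) (nhds 0) :=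
    hasDerivAt_iff_tendsto_slope.mp hF0
  have hev : ∀ᶠ r in nhdsWithin 0 {(0:ℝ)}ᶜ, |slope F 0 r| < 1 := by
    have := hT.eventually (eventually_abs_sub_lt 0 one_pos)
    simpa using this
  have hev' : ∀ᶠ r in nhdsWithin (0:ℝ) (Ioi 0), r ∈ Ioo 0 δ ∧ |slope F 0 r| < 1 := by
    have ha : ∀ᶠ r in nhdsWithin (0:ℝ) (Ioi 0), r ∈ Ioo 0 δ :=
      Filter.eventually_of_mem (Ioo_mem_nhdsGT_of_mem ⟨le_refl _, hδ⟩) (fun r hr => hr)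
    exact ha.and (hev.filter_mono (nhdsWithin_mono _ (fun r hr => ne_of_gt hr)))
  obtain ⟨r, ⟨hr, hrδ⟩, hslope⟩ := hev'.exists
  refine ⟨r, ⟨hr, ?_⟩, hr, hrδ⟩
  -- from the slope bound: F r < r
  have hFr : F r ≤ r := by
    have : slope F 0 r < 1 := (abs_lt.mp hslope).2
    have hFzero : F 0 = 0 := by simp [hF]
    rw [slope_def_field] at this
    have : (F r - F 0) / (r - 0) < 1 := by
      simpa [div_eq_inv_mul] using this
    rw [hFzero, sub_zero, sub_zero, div_lt_one hr] at this
    exact this.le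
  have key : g (x + r) - g (x - 2 * r) ≤ n * (2 * r) := by
    have h4 : g (x + r) - g (x - 2 * r) ≤ (3 * d + 1) * r := by
      have : F r = g (x + r) - g (x - 2 * r) - 3 * d * r := rfl
      nlinarith [hFr]
    calc g (x + r) - g (x - 2 * r) ≤ (3 * d + 1) * r := h4
      _ ≤ n * (2 * r) := by nlinarith [hx, hr.le, (Nat.cast_nonneg n : (0:ℝ) ≤ n)]
  -- measure estimate
  have hsub : closedBall x r ⊆ Set.Ioc (x - 2 * r) (x + r) := by
    rw [Real.closedBall_eq_Icc]
    rintro y ⟨hy1, hy2⟩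
    exact ⟨by linarith, hy2⟩
  have hmeas : (μ (closedBall x r)).toReal ≤ n * (2 * r) := by
    have hmono : (μ (closedBall x r)).toReal ≤ (μ (Set.Ioc (x - 2 * r) (x + r))).toReal :=
      ENNReal.toReal_mono (measure_ne_top μ _) (measure_mono hsub)
    have := hle (x - 2 * r) (x + r) (by linarith)
    linarith
  have h2r : (0:ℝ) ≤ n * (2 * r) := by positivity
  have : μ (closedBall x r) ≤ ENNReal.ofReal ((n : ℝ) * (2 * r)) :=
    (ENNReal.le_ofReal_iff_toReal_le (measure_ne_top μ _) h2r).mpr hmeas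
  calc μ (closedBall x r) ≤ ENNReal.ofReal ((n : ℝ) * (2 * r)) := this
    _ = (n : ℝ≥0∞) * volume (closedBall x r) := by
        rw [Real.volume_closedBall, ENNReal.ofReal_mul (Nat.cast_nonneg n), ENNReal.ofReal_natCast]

/-- A finite Borel measure on `ℝ` whose mass on half-open intervals is dominated
by the increments of a nondecreasing everywhere-differentiable function is
absolutely continuous with respect to Lebesgue measure. -/
theorem absolutelyContinuous_of_Ioc_le_increment
    (μ : Measure ℝ) [IsFiniteMeasure μ]
    (g : ℝ → ℝ) (hg_mono : Monotone g)
    (hg_diff : ∀ x : ℝ, DifferentiableAt ℝ g x)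
    (hle : ∀ s t : ℝ, s ≤ t → (μ (Set.Ioc s t)).toReal ≤ g t - g s) :
    μ ≪ volume := by
  intro E hE
  set En : ℕ → Set ℝ := fun n => E ∩ {x | 3 * deriv g x + 1 ≤ n} with hEn
  have hcover : E ⊆ ⋃ n, En n := by
    intro x hx
    obtain ⟨n, hn⟩ := exists_nat_ge (3 * deriv g x + 1)
    exact Set.mem_iUnion.mpr ⟨n, hx, hn⟩
  have hnull : ∀ n, μ (En n) = 0 := by
    intro n
    refine le_antisymm ?_ zero_le
    refine ENNReal.le_of_forall_pos_le_add (fun ε hε _ => ?_)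
    rw [zero_add]
    have hεn : (ε : ℝ≥0∞) / (n + 1) ≠ 0 := by
      simp [ENNReal.div_eq_zero_iff, ENNReal.coe_ne_zero.mpr (ne_of_gt hε)]
    obtain ⟨t, r, htc, hts, hrf, hcov, hsum⟩ :=
      Besicovitch.exists_closedBall_covering_tsum_measure_le volume hεn
        (fun x => {r : ℝ | 0 < r ∧ μ (closedBall x r) ≤ (n : ℝ≥0∞) * volume (closedBall x r)})
        (En n)
        (fun x hx δ hδ => aux_local μ g hg_diff hle n x hx.2 δ hδ)
    have hEvol : volume (En n) = 0 :=
      measure_mono_null Set.inter_subset_left hE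
    rw [hEvol, zero_add] at hsum
    calc μ (En n) ≤ μ (⋃ x ∈ t, closedBall x (r x)) := measure_mono hcov
      _ ≤ ∑' x : t, μ (closedBall (x : ℝ) (r x)) := measure_biUnion_le μ htc _
      _ ≤ ∑' x : t, (n : ℝ≥0∞) * volume (closedBall (x : ℝ) (r x)) := by
          exact ENNReal.tsum_le_tsum (fun x => (hrf x.1 x.2).2)
      _ = (n : ℝ≥0∞) * ∑' x : t, volume (closedBall (x : ℝ) (r x)) := ENNReal.tsum_mul_left
      _ ≤ (n : ℝ≥0∞) * (ε / (n + 1)) := by gcongr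
      _ ≤ (n + 1) * ((ε : ℝ≥0∞) / (n + 1)) := by gcongr; exact le_self_add
      _ = ε := ENNReal.mul_div_cancel' (by simp) (by simp)
  have : μ E ≤ ∑' n, μ (En n) :=
    (measure_mono hcover).trans (measure_iUnion_le _)
  simpa [hnull] using this
end
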